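/- For $q \in (0,1]$, the function $\varphi(x) = x^q + x^{-q} - (x + x^{-1})^q$ on $(0,\infty)$ satisfies $\varphi(x) = \varphi(x^{-1})$ for all $x > 0$, and attains its maximum at $x = 1$, where $\varphi(1) = 2 - 2^q \le 2\ln 2 \,(1-q)$. -/

import Mathlib

open Real Set

private lemma key_ineq {q u : ℝ} (hq0 : 0 < q) (hq1 : q ≤ 1) (hu0 : 0 < u) (hu1 : u ≤ 1) :
    1 - u ^ q ≤ (1 - u) * (1 + u) ^ (q - 1) := by
  have hu1' : (0:ℝ) < 1 + u := by linarith
  have hv0 : 0 < u⁻¹ := inv_pos.2 hu0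
  have huv : u * u⁻¹ = 1 := mul_inv_cancel₀ hu0.ne'
  have hv1 : 1 ≤ u⁻¹ := by nlinarith [mul_nonneg hv0.le (show (0:ℝ) ≤ 1 - u by linarith)]
  -- lower bound for u ^ q : u*u + (2-q)*(u - u*u) ≤ u ^ q
  have hber1 : 1 + (2 - q) * (u⁻¹ - 1) ≤ (1 + (u⁻¹ - 1)) ^ (2 - q) :=
    one_add_mul_self_le_rpow_one_add (by linarith) (by linarith)
  rw [show 1 + (u⁻¹ - 1) = u⁻¹ by ring] at hber1
  have hid : u ^ q = u ^ (2:ℝ) * u⁻¹ ^ ((2:ℝ) - q) := by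
    rw [Real.inv_rpow hu0.le, ← Real.rpow_neg hu0.le, ← Real.rpow_add hu0]
    norm_num
  have h2 : u ^ (2:ℝ) = u * u := by
    rw [show (2:ℝ) = ((2:ℕ):ℝ) by norm_num, Real.rpow_natCast]; ring
  have hbq : u * u + (2 - q) * (u - u * u) ≤ u ^ q := by
    rw [hid, h2]
    have hmul : u * u * (1 + (2 - q) * (u⁻¹ - 1)) ≤ u * u * (u⁻¹ ^ ((2:ℝ) - q)) :=
      mul_le_mul_of_nonneg_left hber1 (by positivity)
    have hexp : u * u * (1 + (2 - q) * (u⁻¹ - 1)) = u * u + (2 - q) * (u - u * u) := by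
      field_simp
    linarith [hmul, hexp.symm.le, hexp.le]
  -- lower bound for (1+u)^(q-1)
  have hber2 : (1 + u) ^ (1 - q) ≤ 1 + (1 - q) * u :=
    rpow_one_add_le_one_add_mul_self (by linarith) (by linarith) (by linarith)
  have hApos : 0 < (1 + u) ^ (q - 1) := rpow_pos_of_pos hu1' _
  have hBpos : 0 < (1 + u) ^ (1 - q) := rpow_pos_of_pos hu1' _
  have hAB : (1 + u) ^ (q - 1) * (1 + u) ^ (1 - q) = 1 := by
    rw [← Real.rpow_add hu1']; norm_num
  have hA : 1 - (1 - q) * u ≤ (1 + u) ^ (q - 1) := by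
    nlinarith [mul_le_mul_of_nonneg_left hber2 hApos.le, sq_nonneg ((1 - q) * u)]
  have h1u : (0:ℝ) ≤ 1 - u := by linarith
  have hfin := mul_le_mul_of_nonneg_left hA h1u
  nlinarith [hfin, hbq]

theorem stmt_5 (q : ℝ) (hq0 : 0 < q) (hq1 : q ≤ 1) :
    (∀ x : ℝ, 0 < x →
        (x ^ q + x ^ (-q) - (x + x⁻¹) ^ q) = (x⁻¹ ^ q + x⁻¹ ^ (-q) - (x⁻¹ + x⁻¹⁻¹) ^ q)) ∧
    (∀ x : ℝ, 0 < x →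
        x ^ q + x ^ (-q) - (x + x⁻¹) ^ q ≤ (1 : ℝ) ^ q + (1 : ℝ) ^ (-q) - ((1 : ℝ) + 1⁻¹) ^ q) ∧
    ((1 : ℝ) ^ q + (1 : ℝ) ^ (-q) - ((1 : ℝ) + 1⁻¹) ^ q = 2 - 2 ^ q) ∧
    (2 - (2 : ℝ) ^ q ≤ 2 * Real.log 2 * (1 - q)) := by
  -- Part 1 : symmetry
  have part1 : ∀ x : ℝ, 0 < x →
      (x ^ q + x ^ (-q) - (x + x⁻¹) ^ q) = (x⁻¹ ^ q + x⁻¹ ^ (-q) - (x⁻¹ + x⁻¹⁻¹) ^ q) := by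
    intro x hx
    have e1 : x⁻¹ ^ q = x ^ (-q) := by
      rw [Real.inv_rpow hx.le, ← Real.rpow_neg hx.le]
    have e2 : x⁻¹ ^ (-q) = x ^ q := by
      rw [Real.inv_rpow hx.le, Real.rpow_neg hx.le, inv_inv]
    rw [inv_inv, e1, e2, add_comm x⁻¹ x]
    ring
  -- Part 3 : value at 1
  have hrhs : (1 : ℝ) ^ q + (1 : ℝ) ^ (-q) - ((1 : ℝ) + 1⁻¹) ^ q = 2 - 2 ^ q := by
    norm_num [Real.one_rpow]
  -- the function f and its derivative
  set f : ℝ → ℝ := fun x => (x + x⁻¹) ^ q - x ^ q - x ^ (-q) with hfdef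
  have hderiv : ∀ x : ℝ, 0 < x → HasDerivAt f
      (q * (x + x⁻¹) ^ (q - 1) * (1 + -(x ^ 2)⁻¹) - q * x ^ (q - 1) - -q * x ^ (-q - 1)) x := by
    intro x hx
    have hs : 0 < x + x⁻¹ := by positivity
    have h1 : HasDerivAt (fun y : ℝ => y + y⁻¹) (1 + -(x ^ 2)⁻¹) x :=
      (hasDerivAt_id' x).add (hasDerivAt_inv hx.ne')
    have h2 : HasDerivAt (fun y : ℝ => y ^ q) (q * (x + x⁻¹) ^ (q - 1)) (x + x⁻¹) :=
      Real.hasDerivAt_rpow_const (Or.inl hs.ne')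
    have h3 : HasDerivAt (fun y : ℝ => (y + y⁻¹) ^ q)
        (q * (x + x⁻¹) ^ (q - 1) * (1 + -(x ^ 2)⁻¹)) x := by have := h2.comp x h1; exact this
    have h4 : HasDerivAt (fun y : ℝ => y ^ q) (q * x ^ (q - 1)) x :=
      Real.hasDerivAt_rpow_const (Or.inl hx.ne')
    have h5 : HasDerivAt (fun y : ℝ => y ^ (-q)) (-q * x ^ (-q - 1)) x :=
      Real.hasDerivAt_rpow_const (Or.inl hx.ne')
    exact (h3.sub h4).sub h5
  -- nonnegativity of the derivative on (1, ∞)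
  have hnonneg : ∀ x : ℝ, 1 < x →
      0 ≤ q * (x + x⁻¹) ^ (q - 1) * (1 + -(x ^ 2)⁻¹) - q * x ^ (q - 1) - -q * x ^ (-q - 1) := by
    intro x hx1
    have hx : 0 < x := lt_trans one_pos hx1
    set u : ℝ := (x ^ 2)⁻¹ with hu
    have hu0 : 0 < u := by positivity
    have hx2 : 1 ≤ x ^ 2 := by nlinarith
    have huxx : u * x ^ 2 = 1 := inv_mul_cancel₀ (by positivity)
    have hu1 : u ≤ 1 := by nlinarith [mul_le_mul_of_nonneg_left hx2 hu0.le]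
    have hkey := key_ineq hq0 hq1 hu0 hu1
    have hxq1 : 0 < x ^ (q - 1) := rpow_pos_of_pos hx _
    have hxu : x + x⁻¹ = x * (1 + u) := by
      rw [hu]; field_simp
    have hid1 : (x + x⁻¹) ^ (q - 1) = x ^ (q - 1) * (1 + u) ^ (q - 1) := by
      rw [hxu, Real.mul_rpow hx.le (by positivity)]
    have hux : u = x ^ (-2:ℝ) := by
      rw [hu, Real.rpow_neg hx.le, show ((2:ℝ)) = ((2:ℕ):ℝ) by norm_num, Real.rpow_natCast]
    have hid2 : x ^ (q - 1) * u ^ q = x ^ (-q - 1) := by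
      rw [hux, ← Real.rpow_mul hx.le, ← Real.rpow_add hx]
      congr 1
      ring
    have hmul := mul_le_mul_of_nonneg_left hkey hxq1.le
    rw [hid1]
    nlinarith [hmul, hid2, mul_nonneg hq0.le (sub_nonneg.2 hmul)]
  -- monotonicity on [1, ∞)
  have hmono : MonotoneOn f (Ici (1:ℝ)) := by
    apply monotoneOn_of_deriv_nonneg (convex_Ici 1)
    · intro x hx
      exact ((hderiv x (lt_of_lt_of_le one_pos hx)).continuousAt).continuousWithinAt
    · intro x hx
      rw [interior_Ici] at hx
      exact ((hderiv x (lt_trans one_pos hx)).differentiableAt).differentiableWithinAt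
    · intro x hx
      rw [interior_Ici] at hx
      rw [(hderiv x (lt_trans one_pos hx)).deriv]
      exact hnonneg x hx
  have hf1 : f 1 = 2 ^ q - 2 := by
    simp only [hfdef]
    norm_num [Real.one_rpow]
    ring
  have hmain : ∀ x : ℝ, 1 ≤ x → x ^ q + x ^ (-q) - (x + x⁻¹) ^ q ≤ 2 - 2 ^ q := by
    intro x hx
    have h := hmono (mem_Ici.2 (le_refl 1)) (mem_Ici.2 hx) hx
    rw [hf1] at h
    simp only [hfdef] at h
    linarith
  refine ⟨part1, ?_, hrhs, ?_⟩
  · intro x hx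
    rw [hrhs]
    rcases le_or_gt 1 x with h | h
    · exact hmain x h
    · have hx1 : 1 ≤ x⁻¹ := by
        nlinarith [mul_inv_cancel₀ hx.ne', mul_pos (inv_pos.2 hx) (show (0:ℝ) < 1 - x by linarith)]
      rw [part1 x hx]
      exact hmain x⁻¹ hx1
  · have hlog : (2:ℝ) ^ q = 2 * Real.exp ((q - 1) * Real.log 2) := by
      have h : Real.exp (Real.log 2 * q)
          = Real.exp (Real.log 2) * Real.exp ((q - 1) * Real.log 2) := by
        rw [← Real.exp_add]; ring_nf
      rw [Real.rpow_def_of_pos two_pos, h, Real.exp_log two_pos]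
    have hb := Real.add_one_le_exp ((q - 1) * Real.log 2)
    rw [hlog]
    nlinarith [hb]
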